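/- Let s, t be integers with t ≥ 0 ≥ s, and let a, b be nonnegative integers with a + s ≤ b ≤ a + t. Then D(a,b;s,t) = Σ_{k∈ℤ} [ C(a+b, a − k(t−s+2)) − C(a+b, a − k(t−s+2) + t + 1) ], where the sum over k has only finitely many nonzero terms. -/

import Mathlib

/-- Binomial coefficient `C(n,x)` with integer lower argument, zero when `x < 0` or `x > n`. -/
noncomputable def binomZ (n : ℕ) (x : ℤ) : ℕ := if 0 ≤ x then n.choose x.toNat else 0

/-- Circular Pascal array of order `d` with initial offset `y0`:
`σ_{n,k} = Σ_{i=0}^{y0} Σ_{j∈ℤ} C(n, k − i + d·j)`. -/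
noncomputable def circPascal (d y0 n : ℕ) (k : ℤ) : ℕ :=
  ∑ i ∈ Finset.range (y0 + 1), ∑ᶠ j : ℤ, binomZ n (k - i + d * j)

/-- Number of up-steps (`true` entries) among the first `j` steps of `f`. -/
def upCount {N : ℕ} (f : Fin N → Bool) (j : ℕ) : ℕ :=
  (Finset.univ.filter (fun i : Fin N => (i : ℕ) < j ∧ f i = true)).card

/-- `D(a,b;s,t)`: the number of monotonic lattice paths (unit right / unit up steps) from
`(0,0)` to `(a,b)` all of whose lattice points `(x,y)` satisfy `x + s ≤ y ≤ x + t`.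
A path of length `a+b` is encoded by `f : Fin (a+b) → Bool` (`true` = up step); after
`j` steps the path is at `(j − upCount f j, upCount f j)`. -/
noncomputable def KMCount (a b : ℕ) (s t : ℤ) : ℕ :=
  Nat.card {f : Fin (a + b) → Bool //
    upCount f (a + b) = b ∧
    ∀ j : ℕ, j ≤ a + b →
      ((j : ℤ) - upCount f j) + s ≤ (upCount f j : ℤ) ∧
      (upCount f j : ℤ) ≤ ((j : ℤ) - upCount f j) + t}

lemma binomZ_ne_zero {n : ℕ} {x : ℤ} (h : binomZ n x ≠ 0) : 0 ≤ x ∧ x ≤ n := by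
  unfold binomZ at h
  split at h
  · refine ⟨‹_›, ?_⟩
    by_contra hx
    exact h (Nat.choose_eq_zero_of_lt (by omega))
  · exact absurd rfl h

lemma binomZ_eq_zero {n : ℕ} {x : ℤ} (h : ¬(0 ≤ x ∧ x ≤ n)) : binomZ n x = 0 := by
  by_contra h'
  exact h (binomZ_ne_zero h')

lemma binomZ_symm (n : ℕ) (x : ℤ) : binomZ n ((n : ℤ) - x) = binomZ n x := by
  unfold binomZ
  split_ifs with h1 h2 h2
  · rcases le_or_gt x n with hxn | hxn
    · have he : ((n : ℤ) - x).toNat = n - x.toNat := by omega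
      rw [he, Nat.choose_symm (by omega)]
    · rw [Nat.choose_eq_zero_of_lt (by omega), Nat.choose_eq_zero_of_lt (by omega)]
  · exact Nat.choose_eq_zero_of_lt (by omega)
  · exact (Nat.choose_eq_zero_of_lt (by omega)).symm
  · rfl

lemma binomZ_pascal (n : ℕ) (x : ℤ) :
    binomZ (n + 1) x = binomZ n x + binomZ n (x - 1) := by
  unfold binomZ
  rcases lt_or_ge x 0 with hx | hx
  · rw [if_neg (by omega), if_neg (by omega), if_neg (by omega)]
  rcases eq_or_lt_of_le hx with hx0 | hx0
  · rw [if_pos hx, if_pos hx, if_neg (by omega), ← hx0]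
    simp
  · rw [if_pos hx, if_pos hx, if_pos (by omega)]
    have h1 : x.toNat = (x - 1).toNat + 1 := by omega
    rw [h1, Nat.choose_succ_succ]
    simp [Nat.succ_eq_add_one]
    omega

lemma binomZ_zero_arg (x : ℤ) : binomZ 0 x = if x = 0 then 1 else 0 := by
  unfold binomZ
  rcases lt_or_ge x 0 with hx | hx
  · rw [if_neg (by omega), if_neg (by omega)]
  · rw [if_pos hx]
    rcases eq_or_lt_of_le hx with h | h
    · rw [if_pos (by omega)]
      simp [← h]
    · rw [if_neg (by omega), Nat.choose_eq_zero_of_lt (by omega)]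

section G
variable (s t : ℤ)

noncomputable def G (n : ℕ) (x : ℤ) : ℤ :=
  ∑ᶠ k : ℤ, ((binomZ n (x - k * (t - s + 2)) : ℤ) -
    (binomZ n (x - k * (t - s + 2) + t + 1) : ℤ))

lemma G_eq_sum (hs : s ≤ 0) (ht : 0 ≤ t) (n : ℕ) (x : ℤ) (S : Finset ℤ)
    (hS : ∀ k : ℤ, -(|x| + n + t + 1) ≤ k → k ≤ |x| + n + t + 1 → k ∈ S) :
    G s t n x = ∑ k ∈ S,
      ((binomZ n (x - k * (t - s + 2)) : ℤ) -
        (binomZ n (x - k * (t - s + 2) + t + 1) : ℤ)) := by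
  apply finsum_eq_finset_sum_of_support_subset
  intro k hk
  simp only [Function.mem_support] at hk
  have hd : (2:ℤ) ≤ t - s + 2 := by omega
  set d := t - s + 2 with hdd
  have hb : (0 ≤ x - k * d ∧ x - k * d ≤ n) ∨ (0 ≤ x - k * d + t + 1 ∧ x - k * d + t + 1 ≤ n) := by
    by_cases hA : 0 ≤ x - k * d ∧ x - k * d ≤ (n : ℤ)
    · exact Or.inl hA
    by_cases hB : 0 ≤ x - k * d + t + 1 ∧ x - k * d + t + 1 ≤ (n : ℤ)
    · exact Or.inr hB
    exfalso
    rw [binomZ_eq_zero hA, binomZ_eq_zero hB] at hk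
    simp at hk
  have hkd : x - (n:ℤ) - t - 1 ≤ k * d ∧ k * d ≤ x + t + 1 := by
    rcases hb with ⟨h1, h2⟩ | ⟨h1, h2⟩ <;> constructor <;> omega
  have hax : -(|x| + n + t + 1) ≤ k ∧ k ≤ |x| + n + t + 1 := by
    have habs : |x| ≥ x ∧ |x| ≥ -x := ⟨le_abs_self x, neg_le_abs x⟩
    rcases le_or_gt 0 k with hk0 | hk0
    · have : k * 1 ≤ k * d := by
        apply mul_le_mul_of_nonneg_left (by omega) hk0
      constructor <;> [omega; nlinarith [hkd.2]]
    · have : k * d ≤ k * 1 := by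
        apply mul_le_mul_of_nonpos_left (by omega) (by omega)
      constructor <;> [nlinarith [hkd.1]; omega]
  simp only [Set.mem_setOf_eq, Finset.mem_coe]
  exact hS k hax.1 hax.2

lemma G_pascal (hs : s ≤ 0) (ht : 0 ≤ t) (n : ℕ) (x : ℤ) :
    G s t (n + 1) x = G s t n x + G s t n (x - 1) := by
  set M : ℤ := |x| + (n + 1) + t + 1 with hM
  have habs : |x - 1| ≤ |x| + 1 := by
    calc |x - 1| ≤ |x| + |(1 : ℤ)| := abs_sub _ _
    _ = |x| + 1 := by norm_num
  have e1 := G_eq_sum s t hs ht (n+1) x (Finset.Icc (-M) M) (by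
    intro k h1 h2; rw [Finset.mem_Icc]; push_cast at h1 h2 ⊢; omega)
  have e2 := G_eq_sum s t hs ht n x (Finset.Icc (-M) M) (by
    intro k h1 h2; rw [Finset.mem_Icc]; push_cast at h1 h2 ⊢; omega)
  have e3 := G_eq_sum s t hs ht n (x - 1) (Finset.Icc (-M) M) (by
    intro k h1 h2; rw [Finset.mem_Icc]; push_cast at h1 h2 ⊢; omega)
  rw [e1, e2, e3, ← Finset.sum_add_distrib]
  apply Finset.sum_congr rfl
  intro k _
  have p1 := binomZ_pascal n (x - k * (t - s + 2))
  have p2 := binomZ_pascal n (x - k * (t - s + 2) + t + 1)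
  have a1 : x - k * (t - s + 2) - 1 = x - 1 - k * (t - s + 2) := by ring
  have a2 : x - k * (t - s + 2) + t + 1 - 1 = x - 1 - k * (t - s + 2) + t + 1 := by ring
  rw [a1] at p1
  rw [a2] at p2
  push_cast [p1, p2]
  ring


lemma G_top (hs : s ≤ 0) (ht : 0 ≤ t) (n : ℕ) (x : ℤ) (hx : (n : ℤ) = 2 * x + t + 1) :
    G s t n x = 0 := by
  set M : ℤ := |x| + n + t + 1 with hM
  rw [G_eq_sum s t hs ht n x (Finset.Icc (-M) M) (by
    intro k h1 h2; rw [Finset.mem_Icc]; exact ⟨h1, h2⟩)]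
  rw [Finset.sum_sub_distrib]
  have hre : ∀ k : ℤ, (binomZ n (x - k * (t - s + 2) + t + 1) : ℤ) =
      (binomZ n (x - (-k) * (t - s + 2)) : ℤ) := by
    intro k
    have harg : x - k * (t - s + 2) + t + 1 = (n : ℤ) - (x - (-k) * (t - s + 2)) := by
      rw [hx]; ring
    rw [harg, binomZ_symm]
  simp_rw [hre]
  have hswap : ∑ k ∈ Finset.Icc (-M) M, (binomZ n (x - (-k) * (t - s + 2)) : ℤ) =
      ∑ k ∈ Finset.Icc (-M) M, (binomZ n (x - k * (t - s + 2)) : ℤ) := by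
    apply Finset.sum_equiv (Equiv.neg ℤ)
    · intro i; simp only [Finset.mem_Icc, Equiv.neg_apply]; omega
    · intro i _; simp
  rw [hswap, sub_self]

lemma G_bot (hs : s ≤ 0) (ht : 0 ≤ t) (n : ℕ) (x : ℤ) (hx : (n : ℤ) = 2 * x + s - 1) :
    G s t n x = 0 := by
  set M : ℤ := |x| + n + t + 1 with hM
  rw [G_eq_sum s t hs ht n x (Finset.Icc (-M) (M + 1)) (by
    intro k h1 h2; rw [Finset.mem_Icc]; exact ⟨h1, by omega⟩)]
  rw [Finset.sum_sub_distrib]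
  have hre : ∀ k : ℤ, (binomZ n (x - k * (t - s + 2)) : ℤ) =
      (binomZ n (x - (1 - k) * (t - s + 2) + t + 1) : ℤ) := by
    intro k
    have harg : x - k * (t - s + 2) = (n : ℤ) - (x - (1 - k) * (t - s + 2) + t + 1) := by
      rw [hx]; ring
    rw [harg, binomZ_symm]
  simp_rw [hre]
  have hswap : ∑ k ∈ Finset.Icc (-M) (M + 1),
        (binomZ n (x - (1 - k) * (t - s + 2) + t + 1) : ℤ) =
      ∑ k ∈ Finset.Icc (-M) (M + 1), (binomZ n (x - k * (t - s + 2) + t + 1) : ℤ) := by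
    apply Finset.sum_equiv (Equiv.subLeft 1)
    · intro i; simp only [Finset.mem_Icc, Equiv.subLeft_apply]; omega
    · intro i _; simp
  rw [hswap, sub_self]

lemma G_zero (hs : s ≤ 0) (ht : 0 ≤ t) (x : ℤ) (hx1 : s ≤ -(2 * x)) (hx2 : -(2 * x) ≤ t) :
    G s t 0 x = if x = 0 then 1 else 0 := by
  set M : ℤ := |x| + (0 : ℕ) + t + 1 with hM
  have hab : 0 ≤ |x| := abs_nonneg x
  rw [G_eq_sum s t hs ht 0 x (Finset.Icc (-M) M) (by
    intro k h1 h2; rw [Finset.mem_Icc]; exact ⟨h1, h2⟩)]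
  rw [Finset.sum_eq_single_of_mem 0 (by rw [Finset.mem_Icc]; push_cast; omega)]
  · have hne : ¬(x + t + 1 = 0) := by omega
    simp only [zero_mul, sub_zero]
    rw [binomZ_zero_arg, binomZ_zero_arg, if_neg hne]
    split_ifs <;> simp
  · intro k _ hk0
    have habs : |x| ≥ x ∧ |x| ≥ -x := ⟨le_abs_self x, neg_le_abs x⟩
    have hkd : t - s + 2 ≤ k * (t - s + 2) ∨ k * (t - s + 2) ≤ -(t - s + 2) := by
      rcases hk0.lt_or_gt with h | h
      · right
        calc k * (t - s + 2) ≤ (-1) * (t - s + 2) := by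
              apply mul_le_mul_of_nonneg_right (by omega) (by omega)
          _ = -(t - s + 2) := by ring
      · left
        calc t - s + 2 = 1 * (t - s + 2) := (one_mul _).symm
          _ ≤ k * (t - s + 2) := by
              apply mul_le_mul_of_nonneg_right (by omega) (by omega)
    have h1 : ¬(x - k * (t - s + 2) = 0) := by
      intro h; rcases hkd with h' | h' <;> linarith
    have h2 : ¬(x - k * (t - s + 2) + t + 1 = 0) := by
      intro h; rcases hkd with h' | h' <;> linarith
    rw [binomZ_zero_arg, binomZ_zero_arg, if_neg h1, if_neg h2]
    simp



noncomputable def V : ℕ → ℤ → ℕ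
  | 0, u => if u = 0 then 1 else 0
  | (n+1), u =>
      if ((n : ℤ) + 1 - u) + s ≤ u ∧ u ≤ ((n : ℤ) + 1 - u) + t then
        V n (u - 1) + V n u
      else 0

lemma V_neg : ∀ (n : ℕ) (u : ℤ), u < 0 → V s t n u = 0
  | 0, u, hu => by simp only [V]; rw [if_neg (by omega)]
  | (n+1), u, hu => by
      simp only [V]
      split_ifs with h
      · rw [V_neg n (u-1) (by omega), V_neg n u hu]
      · rfl

lemma V_out (hs : s ≤ 0) (ht : 0 ≤ t) :
    ∀ (n : ℕ) (u : ℤ), ¬(((n : ℤ) - u) + s ≤ u ∧ u ≤ ((n : ℤ) - u) + t) →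
      V s t n u = 0
  | 0, u, h => by
      simp only [V]
      rw [if_neg]
      intro hu
      exact h (by constructor <;> (push_cast; omega))
  | (n+1), u, h => by
      simp only [V]
      rw [if_neg]
      intro hc
      exact h (by constructor <;> (push_cast; omega))

lemma V_eq_G (hs : s ≤ 0) (ht : 0 ≤ t) :
    ∀ (n : ℕ) (u : ℤ), ((n : ℤ) - u) + s ≤ u → u ≤ ((n : ℤ) - u) + t →
      (V s t n u : ℤ) = G s t n ((n : ℤ) - u)
  | 0, u, h1, h2 => by
      push_cast at h1 h2 ⊢
      have h0 : (0 : ℤ) - u = -u := by ring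
      rw [h0, G_zero s t hs ht (-u) (by omega) (by omega)]
      simp only [V]
      split_ifs with hu hnu hnu
      · simp
      · omega
      · omega
      · simp
  | (n+1), u, h1, h2 => by
      push_cast at h1 h2
      have e1 : (V s t n (u - 1) : ℤ) = G s t n ((↑n + 1) - u) := by
        by_cases hc : ((n : ℤ) - (u - 1)) + s ≤ (u - 1)
        · rw [V_eq_G hs ht n (u - 1) hc (by omega)]
          congr 1
          ring
        · rw [V_out s t hs ht n (u - 1) (fun hcon => hc hcon.1),
            G_bot s t hs ht n _ (by omega)]
          simp
      have e2 : (V s t n u : ℤ) = G s t n ((↑n + 1) - u - 1) := by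
        by_cases hc : u ≤ ((n : ℤ) - u) + t
        · rw [V_eq_G hs ht n u (by omega) hc]
          congr 1
          ring
        · rw [V_out s t hs ht n u (fun hcon => hc hcon.2),
            G_top s t hs ht n _ (by omega)]
          simp
      have hx1 : (((n + 1 : ℕ)) : ℤ) - u = (↑n + 1) - u := by push_cast; ring
      rw [hx1, G_pascal s t hs ht n ((↑n + 1) - u), ← e1, ← e2]
      simp only [V]
      rw [if_pos (by constructor <;> omega)]
      push_cast
      ring


end G


lemma upCount_eq_sum {N : ℕ} (f : Fin N → Bool) (j : ℕ) :
    upCount f j = ∑ i : Fin N, if (i : ℕ) < j ∧ f i = true then 1 else 0 :=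
  Finset.card_filter _ _

lemma upCount_snoc {n : ℕ} (g : Fin n → Bool) (b : Bool) (j : ℕ) :
    upCount (Fin.snoc g b) j = upCount g j + (if n < j ∧ b = true then 1 else 0) := by
  rw [upCount_eq_sum, upCount_eq_sum, Fin.sum_univ_castSucc]
  congr 1
  · apply Finset.sum_congr rfl
    intro i _
    simp [Fin.snoc_castSucc]
  · simp [Fin.snoc_last]

lemma upCount_stable {N : ℕ} (f : Fin N → Bool) {j : ℕ} (h : N ≤ j) :
    upCount f j = upCount f N := by
  unfold upCount
  congr 1
  apply Finset.filter_congr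
  intro i _
  have hi := i.isLt
  simp only [hi, lt_of_lt_of_le hi h, true_and]

section Count
variable (s t : ℤ)

def Cond (n u : ℕ) (f : Fin n → Bool) : Prop :=
  upCount f n = u ∧ ∀ j : ℕ, j ≤ n →
    ((j : ℤ) - upCount f j) + s ≤ (upCount f j : ℤ) ∧
    (upCount f j : ℤ) ≤ ((j : ℤ) - upCount f j) + t

noncomputable def W (n u : ℕ) : ℕ := Nat.card {f : Fin n → Bool // Cond s t n u f}

end Count

def snocEquiv (n : ℕ) : ((Fin n → Bool) × Bool) ≃ (Fin (n + 1) → Bool) where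
  toFun p := Fin.snoc p.1 p.2
  invFun f := (fun i => f i.castSucc, f (Fin.last n))
  left_inv p := by
    ext i
    · simp
    · simp
  right_inv f := by
    funext i
    induction i using Fin.lastCases <;> simp

def prodBoolSplit {α : Type*} (P : α × Bool → Prop) :
    {p : α × Bool // P p} ≃ ({a : α // P (a, true)} ⊕ {a : α // P (a, false)}) where
  toFun := fun x => match x with
    | ⟨(a, true), h⟩ => Sum.inl ⟨a, h⟩
    | ⟨(a, false), h⟩ => Sum.inr ⟨a, h⟩
  invFun := fun x => match x with
    | Sum.inl ⟨a, h⟩ => ⟨(a, true), h⟩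
    | Sum.inr ⟨a, h⟩ => ⟨(a, false), h⟩
  left_inv := by rintro ⟨⟨a, b⟩, h⟩; cases b <;> rfl
  right_inv := by rintro (⟨a, h⟩ | ⟨a, h⟩) <;> rfl

section Count2
variable (s t : ℤ)

lemma W_card_split (n u : ℕ) : W s t (n + 1) u =
    Nat.card {g : Fin n → Bool // Cond s t (n + 1) u (Fin.snoc g true)} +
    Nat.card {g : Fin n → Bool // Cond s t (n + 1) u (Fin.snoc g false)} := by
  unfold W
  rw [Nat.card_congr ((Equiv.subtypeEquiv (snocEquiv n) (fun p => Iff.rfl)).symm)]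
  rw [Nat.card_congr (prodBoolSplit (fun p => Cond s t (n+1) u (snocEquiv n p)))]
  rw [Nat.card_sum]
  rfl

lemma cond_true_zero (n : ℕ) (g : Fin n → Bool) :
    ¬ Cond s t (n + 1) 0 (Fin.snoc g true) := by
  rintro ⟨h1, -⟩
  rw [upCount_snoc, if_pos ⟨n.lt_succ_self, rfl⟩] at h1
  omega

lemma cond_false_iff (n u : ℕ) (g : Fin n → Bool)
    (hg : ((n : ℤ) + 1 - u) + s ≤ (u : ℤ) ∧ (u : ℤ) ≤ ((n : ℤ) + 1 - u) + t) :
    Cond s t (n + 1) u (Fin.snoc g false) ↔ Cond s t n u g := by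
  have hsn : ∀ j : ℕ, upCount (Fin.snoc g false) j = upCount g j := by
    intro j
    rw [upCount_snoc]
    simp
  constructor
  · rintro ⟨h1, h2⟩
    rw [hsn, upCount_stable g n.le_succ] at h1
    refine ⟨h1, fun j hj => ?_⟩
    have := h2 j (by omega)
    rwa [hsn] at this
  · rintro ⟨h1, h2⟩
    refine ⟨by rw [hsn, upCount_stable g n.le_succ, h1], fun j hj => ?_⟩
    rw [hsn]
    rcases Nat.lt_succ_iff_lt_or_eq.mp (Nat.lt_succ_of_le hj) with h | h
    · exact h2 j (by omega)
    · subst h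
      rw [upCount_stable g n.le_succ, h1]
      constructor <;> (push_cast; omega)

lemma cond_true_iff (n u : ℕ) (g : Fin n → Bool)
    (hg : ((n : ℤ) + 1 - (u + 1)) + s ≤ ((u : ℤ) + 1) ∧
      ((u : ℤ) + 1) ≤ ((n : ℤ) + 1 - (u + 1)) + t) :
    Cond s t (n + 1) (u + 1) (Fin.snoc g true) ↔ Cond s t n u g := by
  have hsn : ∀ j : ℕ, j ≤ n → upCount (Fin.snoc g true) j = upCount g j := by
    intro j hj
    rw [upCount_snoc, if_neg (by omega)]
    omega
  have hlast : upCount (Fin.snoc g true) (n + 1) = upCount g n + 1 := by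
    rw [upCount_snoc, if_pos ⟨n.lt_succ_self, rfl⟩, upCount_stable g n.le_succ]
  constructor
  · rintro ⟨h1, h2⟩
    rw [hlast] at h1
    refine ⟨by omega, fun j hj => ?_⟩
    have := h2 j (by omega)
    rwa [hsn j hj] at this
  · rintro ⟨h1, h2⟩
    refine ⟨by rw [hlast, h1], fun j hj => ?_⟩
    rcases Nat.lt_succ_iff_lt_or_eq.mp (Nat.lt_succ_of_le hj) with h | h
    · rw [hsn j (by omega)]
      exact h2 j (by omega)
    · subst h
      rw [hlast, h1]
      constructor <;> (push_cast; omega)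

lemma W_eq_V (hs : s ≤ 0) (ht : 0 ≤ t) :
    ∀ (n : ℕ) (u : ℕ), W s t n u = V s t n (u : ℤ)
  | 0, u => by
    simp only [V]
    rcases Nat.eq_zero_or_pos u with h0 | hpos
    · subst h0
      rw [if_pos (show ((0:ℕ):ℤ) = 0 by norm_num)]
      unfold W
      rw [Nat.card_eq_one_iff_unique]
      have hup : ∀ (f : Fin 0 → Bool) (j : ℕ), upCount f j = 0 := by
        intro f j
        unfold upCount
        rw [Finset.card_eq_zero]
        apply Finset.eq_empty_of_forall_notMem
        intro i
        exact i.elim0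
      have hcond : ∀ f : Fin 0 → Bool, Cond s t 0 0 f := by
        intro f
        refine ⟨hup f 0, fun j hj => ?_⟩
        interval_cases j
        rw [hup f 0]
        constructor <;> (push_cast; omega)
      refine ⟨⟨fun a b' => ?_⟩, ⟨⟨fun i => i.elim0, hcond _⟩⟩⟩
      apply Subtype.ext
      funext i
      exact i.elim0
    · rw [if_neg (by omega)]
      unfold W
      have : IsEmpty {f : Fin 0 → Bool // Cond s t 0 u f} := by
        refine ⟨fun x => ?_⟩
        obtain ⟨f, h1, -⟩ := x
        unfold upCount at h1
        rw [Finset.card_eq_zero.mpr (Finset.eq_empty_of_forall_notMem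
          (fun i => i.elim0))] at h1
        omega
      exact Nat.card_of_isEmpty
  | (n+1), u => by
    by_cases hg : ((n : ℤ) + 1 - u) + s ≤ (u : ℤ) ∧ (u : ℤ) ≤ ((n : ℤ) + 1 - u) + t
    · rw [W_card_split]
      simp only [V]
      rw [if_pos (by push_cast; push_cast at hg; constructor <;> omega)]
      rcases Nat.eq_zero_or_pos u with h0 | hpos
      · subst h0
        have ht0 : Nat.card {g : Fin n → Bool // Cond s t (n + 1) 0 (Fin.snoc g true)} = 0 := by
          have : IsEmpty {g : Fin n → Bool // Cond s t (n + 1) 0 (Fin.snoc g true)} :=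
            ⟨fun x => cond_true_zero s t n x.1 x.2⟩
          exact Nat.card_of_isEmpty
        have hf0 : Nat.card {g : Fin n → Bool // Cond s t (n + 1) 0 (Fin.snoc g false)} =
            W s t n 0 := by
          unfold W
          exact Nat.card_congr (Equiv.subtypeEquivRight (fun g => cond_false_iff s t n 0 g (by push_cast at hg ⊢; omega)))
        rw [ht0, hf0, W_eq_V hs ht n 0]
        rw [V_neg s t n ((0 : ℕ) - 1 : ℤ) (by omega)]
      · obtain ⟨u', rfl⟩ : ∃ u', u = u' + 1 := ⟨u - 1, by omega⟩
        have ht1 : Nat.card {g : Fin n → Bool // Cond s t (n + 1) (u' + 1) (Fin.snoc g true)} =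
            W s t n u' := by
          unfold W
          exact Nat.card_congr (Equiv.subtypeEquivRight (fun g => cond_true_iff s t n u' g (by push_cast at hg ⊢; constructor <;> omega)))
        have hf1 : Nat.card {g : Fin n → Bool // Cond s t (n + 1) (u' + 1) (Fin.snoc g false)} =
            W s t n (u' + 1) := by
          unfold W
          exact Nat.card_congr (Equiv.subtypeEquivRight (fun g => cond_false_iff s t n (u' + 1) g (by push_cast at hg ⊢; constructor <;> omega)))
        rw [ht1, hf1, W_eq_V hs ht n u', W_eq_V hs ht n (u' + 1),
          show ((u' + 1 : ℕ) : ℤ) - 1 = (u' : ℤ) from by push_cast; ring]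
    · simp only [V]
      rw [if_neg (by push_cast; push_cast at hg; omega)]
      unfold W
      have : IsEmpty {f : Fin (n + 1) → Bool // Cond s t (n + 1) u f} := by
        refine ⟨fun x => ?_⟩
        obtain ⟨f, h1, h2⟩ := x
        have h3 := h2 (n + 1) le_rfl
        rw [h1] at h3
        push_cast at h3
        exact hg (by push_cast; constructor <;> omega)
      exact Nat.card_of_isEmpty

end Count2

/-- The Krattenthaler–Mohanty formula:
`D(a,b;s,t) = Σ_{k∈ℤ} [C(a+b, a−k(t−s+2)) − C(a+b, a−k(t−s+2)+t+1)]`. -/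
theorem KM_formula (s t : ℤ) (hs : s ≤ 0) (ht : 0 ≤ t) (a b : ℕ)
    (h1 : (a : ℤ) + s ≤ (b : ℤ)) (h2 : (b : ℤ) ≤ (a : ℤ) + t) :
    (KMCount a b s t : ℤ) =
      ∑ᶠ k : ℤ, ((binomZ (a + b) ((a : ℤ) - k * (t - s + 2)) : ℤ) -
        (binomZ (a + b) ((a : ℤ) - k * (t - s + 2) + t + 1) : ℤ)) := by
  have h0 : KMCount a b s t = W s t (a + b) b := rfl
  rw [h0, W_eq_V s t hs ht (a + b) b,
    V_eq_G s t hs ht (a + b) b (by push_cast; omega) (by push_cast; omega),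
    show (((a + b : ℕ)) : ℤ) - (b : ℤ) = (a : ℤ) from by push_cast; ring]
  rfl
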